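/- Let M be a stochastic MDP over (S, A) with initial distribution μ, transition kernels P_h, and reward distributions R(s, a), and let π be any policy. Sample a random deterministic MDP (a 'trajectory tree') as follows: draw a start state ŝ_1 ∼ μ, and independently for every pair (s, a) with s ∈ S_h and h < H draw a next state ŝ(s, a) ∼ P_h(· | s, a), and independently for every pair (s, a) with s ∈ S draw a reward r̂(s, a) ∼ R(s, a). Let v̂^π = Σ_{h=1}^H r̂(s_h, π(s_h)) be the cumulative reward of π along the deterministic trajectory with s_1 = ŝ_1 and s_{h+1} = ŝ(s_h, π(s_h)). Then E[v̂^π] = V^π, i.e., the trajectory-tree estimate is an unbiased estimate of the value of π in M. -/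

import Mathlib

open MeasureTheory
open scoped ENNReal

/-- A stochastic MDP over a layered state space `S : ℕ → Type` with action set `A` and
stochastic rewards: an initial distribution on layer `0`, transition kernels between
consecutive layers, and a reward distribution (a measure on `ℝ`, supported on `[0,1]`)
for every state-action pair. -/
structure StoMDPR (S : ℕ → Type) (A : Type) where
  init : PMF (S 0)
  step : ∀ h : ℕ, S h → A → PMF (S (h + 1))
  reward : ∀ h : ℕ, S h → A → Measure ℝ

/-- `stateProbR init step π h s` is the probability (as a real number) that the Markov chain
`s_0 ∼ init`, `s_{h+1} ∼ step h s_h (π h s_h)` is at state `s` at layer `h`. -/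
noncomputable def stateProbR {S : ℕ → Type} {A : Type} [∀ h, Fintype (S h)]
    (init : PMF (S 0)) (step : ∀ h : ℕ, S h → A → PMF (S (h + 1)))
    (π : ∀ h : ℕ, S h → A) : ∀ h : ℕ, S h → ℝ
  | 0 => fun s => (init s).toReal
  | h + 1 => fun s' =>
      ∑ s : S h, stateProbR init step π h s * (step h s (π h s) s').toReal

/-- The deterministic trajectory through a sampled trajectory tree: `s_0` is the sampled
start state and `s_{h+1} = T(s_h, π(s_h))`, where `T` is the table of sampled next states
(one for every layer `h < H - 1` and state-action pair of that layer). -/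
noncomputable def treeTraj (H : ℕ) {S : ℕ → Type} {A : Type} [∀ h, Nonempty (S h)]
    (s0 : S 0) (T : ∀ q : (h : Fin (H - 1)) × (S h.1 × A), S (q.1.1 + 1))
    (π : ∀ h : ℕ, S h → A) : ∀ h : ℕ, S h
  | 0 => s0
  | h + 1 =>
      if hh : h < H - 1 then
        T ⟨⟨h, hh⟩, (treeTraj H s0 T π h, π h (treeTraj H s0 T π h))⟩
      else Classical.arbitrary (S (h + 1))

/-- The trajectory-tree estimate `v̂^π = Σ_{h<H} r̂(s_h, π(s_h))`: the cumulative sampled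
reward of the policy `π` along its deterministic trajectory in the sampled trajectory
tree, where `r` is the table of sampled rewards (one for every layer `h < H` and
state-action pair of that layer). -/
noncomputable def treeValue (H : ℕ) {S : ℕ → Type} {A : Type} [∀ h, Nonempty (S h)]
    (s0 : S 0) (T : ∀ q : (h : Fin (H - 1)) × (S h.1 × A), S (q.1.1 + 1))
    (r : ((h : Fin H) × (S h.1 × A)) → ℝ) (π : ∀ h : ℕ, S h → A) : ℝ :=
  ∑ h : Fin H, r ⟨h, (treeTraj H s0 T π h.1, π h.1 (treeTraj H s0 T π h.1))⟩

/-- The value `V^π = E^π[Σ_{h<H} r_h] = Σ_{h<H} Σ_{s ∈ S_h} Pr^π[s_h = s]·E[R(s, π(s))]`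
of the policy `π` in the stochastic MDP `M` with horizon `H`. -/
noncomputable def valueOf (H : ℕ) {S : ℕ → Type} {A : Type} [∀ h, Fintype (S h)]
    (M : StoMDPR S A) (π : ∀ h : ℕ, S h → A) : ℝ :=
  ∑ h : Fin H, ∑ s : S h.1,
    stateProbR M.init M.step π h.1 s * ∫ x, x ∂(M.reward h.1 s (π h.1 s))

lemma treeTraj_congr {H : ℕ} {S : ℕ → Type} {A : Type} [∀ h, Nonempty (S h)]
    (s0 : S 0) (T T' : ∀ q : (h : Fin (H - 1)) × (S h.1 × A), S (q.1.1 + 1))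
    (π : ∀ h : ℕ, S h → A) (h : ℕ)
    (hT : ∀ q : (h' : Fin (H - 1)) × (S h'.1 × A), q.1.1 < h → T q = T' q) :
    treeTraj H s0 T π h = treeTraj H s0 T' π h := by
  induction h with
  | zero => rfl
  | succ h ih =>
    have e := ih (fun q hq => hT q (Nat.lt_succ_of_lt hq))
    by_cases hh : h < H - 1
    · rw [treeTraj, treeTraj, dif_pos hh, dif_pos hh, e]
      exact hT _ (Nat.lt_succ_self h)
    · rw [treeTraj, treeTraj, dif_neg hh, dif_neg hh]

lemma fiber_sum_const {ι : Type*} [Fintype ι] [DecidableEq ι] {κ : ι → Type*}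
    [∀ i, Fintype (κ i)] [∀ i, DecidableEq (κ i)] (q : ι) (G : (∀ i, κ i) → ℝ)
    (hG : ∀ T t, G (Function.update T q t) = G T) (t t' : κ q) :
    ∑ T : ∀ i, κ i, (if T q = t then G T else 0)
      = ∑ T : ∀ i, κ i, (if T q = t' then G T else 0) := by
  have hinv : Function.Involutive
      (fun T : ∀ i, κ i => Function.update T q (Equiv.swap t t' (T q))) := by
    intro T
    simp only [Function.update_self, Function.update_idem, Equiv.swap_apply_self,
      Function.update_eq_self]
  have := Equiv.sum_comp (hinv.toPerm _)
      (fun T : ∀ i, κ i => if T q = t then G T else 0)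
  rw [← this]
  refine Finset.sum_congr rfl fun T _ => ?_
  simp only [Function.Involutive.coe_toPerm, Function.update_self, hG]
  by_cases h : T q = t'
  · rw [if_pos h, if_pos (by rw [h, Equiv.swap_apply_right])]
  · rw [if_neg h, if_neg ?_]
    intro hc
    apply h
    have := (Equiv.swap t t').injective (a₁ := T q) (a₂ := t')
    exact this (by rw [hc, Equiv.swap_apply_right])

lemma sum_mul_eval {ι : Type*} [Fintype ι] [DecidableEq ι] {κ : ι → Type*}
    [∀ i, Fintype (κ i)] [∀ i, DecidableEq (κ i)] [∀ i, Nonempty (κ i)] (q : ι)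
    (G : (∀ i, κ i) → ℝ) (hG : ∀ T t, G (Function.update T q t) = G T) (v : κ q → ℝ) :
    ∑ T : ∀ i, κ i, G T * v (T q)
      = (∑ t, v t) *
        ∑ T : ∀ i, κ i, (if T q = Classical.arbitrary (κ q) then G T else 0) := by
  calc ∑ T : ∀ i, κ i, G T * v (T q)
      = ∑ T : ∀ i, κ i, ∑ t, (if T q = t then G T * v t else 0) := by
        refine Finset.sum_congr rfl fun T _ => ?_
        rw [Finset.sum_ite_eq]
        simp
    _ = ∑ t, ∑ T : ∀ i, κ i, (if T q = t then G T else 0) * v t := by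
        rw [Finset.sum_comm]
        refine Finset.sum_congr rfl fun t _ => Finset.sum_congr rfl fun T _ => ?_
        by_cases h : T q = t <;> simp [h]
    _ = ∑ t, (∑ T : ∀ i, κ i, (if T q = Classical.arbitrary (κ q) then G T else 0)) * v t := by
        refine Finset.sum_congr rfl fun t _ => ?_
        rw [← Finset.sum_mul, fiber_sum_const q G hG t (Classical.arbitrary (κ q))]
    _ = _ := by rw [← Finset.mul_sum, mul_comm]

lemma pmf_sum_toReal {α : Type*} [Fintype α] (p : PMF α) : ∑ a, (p a).toReal = 1 := by
  rw [← ENNReal.toReal_sum (fun a _ => p.apply_ne_top a), ← tsum_fintype (L := .unconditional _), p.tsum_coe,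
    ENNReal.toReal_one]

open scoped Classical in
lemma step_factor {H : ℕ} {S : ℕ → Type} {A : Type} [∀ h, Fintype (S h)]
    [∀ h, Nonempty (S h)] [Fintype A] (M : StoMDPR S A) (π : ∀ h : ℕ, S h → A)
    (h : ℕ) (hh : h < H - 1) (s' : S h) (s : S (h + 1)) (s0 : S 0) :
    ∑ T : ∀ q : (h' : Fin (H - 1)) × (S h'.1 × A), S (q.1.1 + 1),
        (if treeTraj H s0 T π h = s' then
          (if T ⟨⟨h, hh⟩, (s', π h s')⟩ = s then
            (M.init s0).toReal * ∏ q, (M.step q.1.1 q.2.1 q.2.2 (T q)).toReal else 0)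
          else 0)
      = (M.step h s' (π h s') s).toReal *
        ∑ T : ∀ q : (h' : Fin (H - 1)) × (S h'.1 × A), S (q.1.1 + 1),
          (if treeTraj H s0 T π h = s' then
            (M.init s0).toReal * ∏ q, (M.step q.1.1 q.2.1 q.2.2 (T q)).toReal else 0) := by
  set Q := (h' : Fin (H - 1)) × (S h'.1 × A) with hQ
  set qs : Q := ⟨⟨h, hh⟩, (s', π h s')⟩ with hqs
  set G : (∀ q : Q, S (q.1.1 + 1)) → ℝ := fun T =>
    if treeTraj H s0 T π h = s' then
      (M.init s0).toReal *
        ∏ q ∈ Finset.univ.erase qs, (M.step q.1.1 q.2.1 q.2.2 (T q)).toReal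
    else 0 with hGdef
  have hG : ∀ T t, G (Function.update T qs t) = G T := by
    intro T t
    have htr : treeTraj H s0 (Function.update T qs t) π h = treeTraj H s0 T π h :=
      treeTraj_congr _ _ _ _ _ (fun q hq =>
        Function.update_of_ne (β := fun q : Q => S (q.1.1 + 1))
          (fun hqq => by rw [hqq] at hq; exact lt_irrefl h hq) t T)
    simp only [hGdef, htr]
    congr 1
    refine congrArg _ (Finset.prod_congr rfl fun q hq => ?_)
    rw [Function.update_of_ne (Finset.ne_of_mem_erase hq)]
  have hsplit : ∀ T : ∀ q : Q, S (q.1.1 + 1),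
      (M.init s0).toReal * ∏ q, (M.step q.1.1 q.2.1 q.2.2 (T q)).toReal
        = ((M.init s0).toReal *
            ∏ q ∈ Finset.univ.erase qs, (M.step q.1.1 q.2.1 q.2.2 (T q)).toReal) *
          (M.step qs.1.1 qs.2.1 qs.2.2 (T qs)).toReal := by
    intro T
    rw [← Finset.mul_prod_erase Finset.univ _ (Finset.mem_univ qs)]
    ring
  have hL : ∑ T : ∀ q : Q, S (q.1.1 + 1),
      (if treeTraj H s0 T π h = s' then
        (if T qs = s then
          (M.init s0).toReal * ∏ q, (M.step q.1.1 q.2.1 q.2.2 (T q)).toReal else 0)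
        else 0)
      = ∑ T : ∀ q : Q, S (q.1.1 + 1), G T *
          (fun t => if t = s then (M.step qs.1.1 qs.2.1 qs.2.2 t).toReal else 0) (T qs) := by
    refine Finset.sum_congr rfl fun T _ => ?_
    simp only [hGdef]
    by_cases h1 : treeTraj H s0 T π h = s'
    · by_cases h2 : T qs = s
      · rw [if_pos h1, if_pos h2, if_pos h1, if_pos h2, hsplit T]
      · rw [if_pos h1, if_neg h2, if_pos h1, if_neg h2, mul_zero]
    · rw [if_neg h1, if_neg h1, zero_mul]
  have hR : ∑ T : ∀ q : Q, S (q.1.1 + 1),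
      (if treeTraj H s0 T π h = s' then
        (M.init s0).toReal * ∏ q, (M.step q.1.1 q.2.1 q.2.2 (T q)).toReal else 0)
      = ∑ T : ∀ q : Q, S (q.1.1 + 1), G T *
          (fun t => (M.step qs.1.1 qs.2.1 qs.2.2 t).toReal) (T qs) := by
    refine Finset.sum_congr rfl fun T _ => ?_
    simp only [hGdef]
    by_cases h1 : treeTraj H s0 T π h = s'
    · rw [if_pos h1, if_pos h1, hsplit T]
    · rw [if_neg h1, if_neg h1, zero_mul]
  rw [hL, hR, sum_mul_eval qs G hG
      (fun t => if t = s then ((M.step qs.1.1 qs.2.1 qs.2.2) t).toReal else 0),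
    sum_mul_eval qs G hG (fun t => ((M.step qs.1.1 qs.2.1 qs.2.2) t).toReal)]
  have hv1 : (∑ t, (fun t => if t = s then (M.step qs.1.1 qs.2.1 qs.2.2 t).toReal else 0) t)
      = (M.step h s' (π h s') s).toReal := by
    rw [Finset.sum_ite_eq' Finset.univ s (fun t => (M.step qs.1.1 qs.2.1 qs.2.2 t).toReal)]
    simp
    rfl
  have hv2 : (∑ t, (fun t => (M.step qs.1.1 qs.2.1 qs.2.2 t).toReal) t) = 1 :=
    pmf_sum_toReal _
  rw [hv1, hv2]
  ring

open scoped Classical in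
lemma piStep_sum_one {H : ℕ} {S : ℕ → Type} {A : Type} [∀ h, Fintype (S h)]
    [∀ h, Nonempty (S h)] [Fintype A] (M : StoMDPR S A) :
    ∑ T : ∀ q : (h' : Fin (H - 1)) × (S h'.1 × A), S (q.1.1 + 1),
      ∏ q, (M.step q.1.1 q.2.1 q.2.2 (T q)).toReal = 1 := by
  rw [← Fintype.prod_sum (fun (q : (h' : Fin (H - 1)) × (S h'.1 × A)) (t : S (q.1.1 + 1)) =>
    (M.step q.1.1 q.2.1 q.2.2 t).toReal)]
  exact Finset.prod_eq_one fun q _ => pmf_sum_toReal _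

open scoped Classical in
lemma traj_prob {H : ℕ} {S : ℕ → Type} {A : Type} [∀ h, Fintype (S h)]
    [∀ h, Nonempty (S h)] [Fintype A] (M : StoMDPR S A) (π : ∀ h : ℕ, S h → A) :
    ∀ (h : ℕ), h < H → ∀ s : S h,
    ∑ x : S 0 × (∀ q : (h' : Fin (H - 1)) × (S h'.1 × A), S (q.1.1 + 1)),
        (if treeTraj H x.1 x.2 π h = s then
          (M.init x.1).toReal * ∏ q, (M.step q.1.1 q.2.1 q.2.2 (x.2 q)).toReal else 0)
      = stateProbR M.init M.step π h s := by
  intro h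
  induction h with
  | zero =>
    intro _ s
    rw [Fintype.sum_prod_type]
    have hpoint : ∀ s0 : S 0,
        (∑ T : ∀ q : (h' : Fin (H - 1)) × (S h'.1 × A), S (q.1.1 + 1),
          if treeTraj H s0 T π 0 = s then
            (M.init s0).toReal * ∏ q, (M.step q.1.1 q.2.1 q.2.2 (T q)).toReal else 0)
        = (if s0 = s then (M.init s0).toReal else 0) := by
      intro s0
      have ht0 : ∀ T, treeTraj H s0 T π 0 = s0 := fun _ => rfl
      simp only [ht0]
      by_cases h0 : s0 = s
      · simp only [if_pos h0, ← Finset.mul_sum, piStep_sum_one M, mul_one]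
      · simp only [if_neg h0, Finset.sum_const_zero]
    simp only [hpoint]
    rw [Finset.sum_ite_eq' Finset.univ s (fun s0 => (M.init s0).toReal)]
    simp [stateProbR]
  | succ h ih =>
    intro hh1 s
    have hhH : h < H := Nat.lt_of_succ_lt hh1
    have hh : h < H - 1 := by omega
    have hstep : ∀ (x : S 0 × (∀ q : (h' : Fin (H - 1)) × (S h'.1 × A), S (q.1.1 + 1))),
        treeTraj H x.1 x.2 π (h + 1)
          = x.2 ⟨⟨h, hh⟩, (treeTraj H x.1 x.2 π h, π h (treeTraj H x.1 x.2 π h))⟩ := by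
      intro x
      rw [treeTraj, dif_pos hh]
    have hsplit : ∀ (x : S 0 × (∀ q : (h' : Fin (H - 1)) × (S h'.1 × A), S (q.1.1 + 1))),
        (if x.2 ⟨⟨h, hh⟩, (treeTraj H x.1 x.2 π h, π h (treeTraj H x.1 x.2 π h))⟩ = s then
          (M.init x.1).toReal * ∏ q, (M.step q.1.1 q.2.1 q.2.2 (x.2 q)).toReal else 0)
        = ∑ s' : S h, (if treeTraj H x.1 x.2 π h = s' then
            (if x.2 ⟨⟨h, hh⟩, (s', π h s')⟩ = s then
              (M.init x.1).toReal * ∏ q, (M.step q.1.1 q.2.1 q.2.2 (x.2 q)).toReal else 0)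
            else 0) := by
      intro x
      rw [Finset.sum_ite_eq]
      simp
    simp only [hstep, hsplit]
    rw [Finset.sum_comm]
    simp only [stateProbR]
    refine Finset.sum_congr rfl fun s' _ => ?_
    rw [← ih hhH s', Fintype.sum_prod_type, Fintype.sum_prod_type, Finset.sum_mul]
    refine Finset.sum_congr rfl fun s0 _ => ?_
    rw [step_factor M π h hh s' s s0, mul_comm]

lemma pi_map_eval {ι : Type*} [Fintype ι] {κ : ι → Type*} [∀ i, MeasurableSpace (κ i)]
    (μ : ∀ i, Measure (κ i)) [∀ i, IsProbabilityMeasure (μ i)] (q : ι) :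
    (Measure.pi μ).map (Function.eval q) = μ q := by
  classical
  ext B hB
  rw [Measure.map_apply (measurable_pi_apply q) hB, Set.eval_preimage, Measure.pi_pi]
  rw [Fintype.prod_eq_single q (fun j hj => by
    rw [Function.update_of_ne hj]; exact measure_univ)]
  rw [Function.update_self]

lemma integral_eval_pi {ι : Type*} [Fintype ι] (μ : ι → Measure ℝ)
    [∀ i, IsProbabilityMeasure (μ i)] (q : ι) :
    ∫ ω : ι → ℝ, ω q ∂(Measure.pi μ) = ∫ x, x ∂(μ q) := by
  have h := integral_map (μ := Measure.pi μ) (φ := Function.eval q) (f := fun y : ℝ => y)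
    (measurable_pi_apply q).aemeasurable measurable_id.aestronglyMeasurable
  rw [pi_map_eval] at h
  exact h.symm

noncomputable def idxOf (H : ℕ) {S : ℕ → Type} {A : Type} [∀ h, Nonempty (S h)]
    (π : ∀ h : ℕ, S h → A) (h : Fin H)
    (x : S 0 × (∀ q : (h : Fin (H - 1)) × (S h.1 × A), S (q.1.1 + 1))) :
    (h : Fin H) × (S h.1 × A) :=
  ⟨h, (treeTraj H x.1 x.2 π h.1, π h.1 (treeTraj H x.1 x.2 π h.1))⟩


open scoped Classical

/-- Sample a random trajectory tree from the stochastic MDP `M`: draw a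
start state `ŝ_1 ∼ μ`, independently a next state `ŝ(s,a) ∼ P_h(·|s,a)` for every
state-action pair of every non-final layer, and independently a reward
`r̂(s,a) ∼ R(s,a)` for every state-action pair of every layer; the sampling measure is
the product measure below.  Then the cumulative reward `v̂^π` of `π` on the sampled
trajectory tree is an unbiased estimate of the value of `π` in `M`: `E[v̂^π] = V^π`. -/
theorem trajectoryTree_unbiased (H : ℕ) (hH : 1 ≤ H) (S : ℕ → Type) (A : Type)
    [∀ h, Fintype (S h)] [∀ h, Nonempty (S h)] [∀ h, MeasurableSpace (S h)]
    [∀ h, MeasurableSingletonClass (S h)] [Fintype A]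
    (M : StoMDPR S A)
    [hprob : ∀ (h : ℕ) (s : S h) (a : A), IsProbabilityMeasure (M.reward h s a)]
    (hsupp : ∀ (h : ℕ) (s : S h) (a : A), (M.reward h s a) (Set.Icc (0 : ℝ) 1)ᶜ = 0)
    (π : ∀ h : ℕ, S h → A) :
    ∫ ω : (S 0 × (∀ q : (h : Fin (H - 1)) × (S h.1 × A), S (q.1.1 + 1)))
            × (((h : Fin H) × (S h.1 × A)) → ℝ),
        treeValue H ω.1.1 ω.1.2 ω.2 π
      ∂((M.init.toMeasure.prod
            (Measure.pi fun q : (h : Fin (H - 1)) × (S h.1 × A) =>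
              (M.step q.1.1 q.2.1 q.2.2).toMeasure)).prod
          (Measure.pi fun q : (h : Fin H) × (S h.1 × A) =>
            M.reward q.1.1 q.2.1 q.2.2)) =
      valueOf H M π := by
  set ν : Measure (S 0 × (∀ q : (h : Fin (H - 1)) × (S h.1 × A), S (q.1.1 + 1))) :=
    M.init.toMeasure.prod
      (Measure.pi fun q : (h : Fin (H - 1)) × (S h.1 × A) =>
        (M.step q.1.1 q.2.1 q.2.2).toMeasure) with hν
  set ρ : Measure (((h : Fin H) × (S h.1 × A)) → ℝ) :=
    Measure.pi fun q : (h : Fin H) × (S h.1 × A) => M.reward q.1.1 q.2.1 q.2.2 with hρ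
  have hmeasf : ∀ h : Fin H, Measurable
      (fun ω : (S 0 × (∀ q : (h : Fin (H - 1)) × (S h.1 × A), S (q.1.1 + 1)))
          × (((h : Fin H) × (S h.1 × A)) → ℝ) => ω.2 (idxOf H π h ω.1)) := by
    intro h
    have hrw : (fun ω : (S 0 × (∀ q : (h : Fin (H - 1)) × (S h.1 × A), S (q.1.1 + 1)))
          × (((h : Fin H) × (S h.1 × A)) → ℝ) => ω.2 (idxOf H π h ω.1))
        = fun ω => ∑ x : S 0 × (∀ q : (h : Fin (H - 1)) × (S h.1 × A), S (q.1.1 + 1)),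
            (if ω.1 = x then ω.2 (idxOf H π h x) else 0) := by
      funext ω
      rw [Finset.sum_ite_eq]
      simp
    rw [hrw]
    refine Finset.measurable_sum _ fun x _ => Measurable.ite ?_
      ((measurable_pi_apply (idxOf H π h x)).comp measurable_snd) measurable_const
    exact measurable_fst (measurableSet_singleton x)
  have haeq : ∀ q : (h : Fin H) × (S h.1 × A), ∀ᵐ ω ∂(ν.prod ρ),
      ω.2 q ∈ Set.Icc (0 : ℝ) 1 := by
    intro q
    have h1 : ρ (Function.eval q ⁻¹' (Set.Icc (0 : ℝ) 1)ᶜ) = 0 := by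
      rw [hρ]
      exact Measure.pi_eval_preimage_null
        (μ := fun q : (h : Fin H) × (S h.1 × A) => M.reward q.1.1 q.2.1 q.2.2)
        (i := q) (hsupp q.1.1 q.2.1 q.2.2)
    rw [ae_iff]
    have h2 : {ω : (S 0 × (∀ q : (h : Fin (H - 1)) × (S h.1 × A), S (q.1.1 + 1)))
          × (((h : Fin H) × (S h.1 × A)) → ℝ) | ¬ ω.2 q ∈ Set.Icc (0 : ℝ) 1}
        = Set.univ ×ˢ (Function.eval q ⁻¹' (Set.Icc (0 : ℝ) 1)ᶜ) := by
      ext ⟨a, b⟩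
      simp [Set.mem_prod, Function.eval]
    rw [h2, Measure.prod_prod, h1, mul_zero]
  have haeall : ∀ᵐ ω ∂(ν.prod ρ), ∀ q : (h : Fin H) × (S h.1 × A),
      ω.2 q ∈ Set.Icc (0 : ℝ) 1 := ae_all_iff.mpr haeq
  have hintf : ∀ h : Fin H, Integrable
      (fun ω : (S 0 × (∀ q : (h : Fin (H - 1)) × (S h.1 × A), S (q.1.1 + 1)))
          × (((h : Fin H) × (S h.1 × A)) → ℝ) => ω.2 (idxOf H π h ω.1)) (ν.prod ρ) := by
    intro h
    refine Integrable.mono' (integrable_const (1 : ℝ)) (hmeasf h).aestronglyMeasurable ?_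
    filter_upwards [haeall] with ω hω
    have h1 := hω (idxOf H π h ω.1)
    rw [Real.norm_eq_abs, abs_le]
    exact ⟨by linarith [h1.1], h1.2⟩
  calc ∫ ω : (S 0 × (∀ q : (h : Fin (H - 1)) × (S h.1 × A), S (q.1.1 + 1)))
            × (((h : Fin H) × (S h.1 × A)) → ℝ),
        treeValue H ω.1.1 ω.1.2 ω.2 π ∂(ν.prod ρ)
      = ∫ ω : (S 0 × (∀ q : (h : Fin (H - 1)) × (S h.1 × A), S (q.1.1 + 1)))
            × (((h : Fin H) × (S h.1 × A)) → ℝ),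
          ∑ h : Fin H, ω.2 (idxOf H π h ω.1) ∂(ν.prod ρ) := rfl
    _ = ∑ h : Fin H, ∫ ω : (S 0 × (∀ q : (h : Fin (H - 1)) × (S h.1 × A), S (q.1.1 + 1)))
            × (((h : Fin H) × (S h.1 × A)) → ℝ),
          ω.2 (idxOf H π h ω.1) ∂(ν.prod ρ) :=
        integral_finset_sum _ (fun h _ => hintf h)
    _ = ∑ h : Fin H, ∑ s : S h.1,
          stateProbR M.init M.step π h.1 s * ∫ x, x ∂(M.reward h.1 s (π h.1 s)) := ?_
    _ = valueOf H M π := rfl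
  refine Finset.sum_congr rfl fun h _ => ?_
  calc ∫ ω : (S 0 × (∀ q : (h : Fin (H - 1)) × (S h.1 × A), S (q.1.1 + 1)))
            × (((h : Fin H) × (S h.1 × A)) → ℝ),
        ω.2 (idxOf H π h ω.1) ∂(ν.prod ρ)
      = ∫ x : S 0 × (∀ q : (h : Fin (H - 1)) × (S h.1 × A), S (q.1.1 + 1)),
          (∫ ω2 : ((h : Fin H) × (S h.1 × A)) → ℝ, ω2 (idxOf H π h x) ∂ρ) ∂ν :=
        integral_prod _ (hintf h)
    _ = ∫ x : S 0 × (∀ q : (h : Fin (H - 1)) × (S h.1 × A), S (q.1.1 + 1)),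
          (∫ y : ℝ, y ∂(M.reward h.1 (treeTraj H x.1 x.2 π h.1)
            (π h.1 (treeTraj H x.1 x.2 π h.1)))) ∂ν := by
        refine integral_congr_ae (Filter.Eventually.of_forall fun x => ?_)
        show (∫ ω2 : ((h : Fin H) × (S h.1 × A)) → ℝ, ω2 (idxOf H π h x) ∂ρ)
          = ∫ y : ℝ, y ∂(M.reward h.1 (treeTraj H x.1 x.2 π h.1)
              (π h.1 (treeTraj H x.1 x.2 π h.1)))
        rw [hρ]
        exact integral_eval_pi _ (idxOf H π h x)
    _ = ∑ x : S 0 × (∀ q : (h : Fin (H - 1)) × (S h.1 × A), S (q.1.1 + 1)),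
          (ν {x}).toReal • (∫ y : ℝ, y ∂(M.reward h.1 (treeTraj H x.1 x.2 π h.1)
            (π h.1 (treeTraj H x.1 x.2 π h.1)))) := integral_fintype
        (Integrable.of_finite (μ := ν)
          (f := fun x : S 0 × (∀ q : (h : Fin (H - 1)) × (S h.1 × A), S (q.1.1 + 1)) =>
            ∫ y : ℝ, y ∂(M.reward h.1 (treeTraj H x.1 x.2 π h.1)
              (π h.1 (treeTraj H x.1 x.2 π h.1)))))
    _ = ∑ x : S 0 × (∀ q : (h : Fin (H - 1)) × (S h.1 × A), S (q.1.1 + 1)),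
          ∑ s : S h.1, (if treeTraj H x.1 x.2 π h.1 = s then
            ((M.init x.1).toReal * ∏ q, (M.step q.1.1 q.2.1 q.2.2 (x.2 q)).toReal)
              * ∫ y : ℝ, y ∂(M.reward h.1 s (π h.1 s)) else 0) := ?_
    _ = ∑ s : S h.1, (∑ x : S 0 × (∀ q : (h : Fin (H - 1)) × (S h.1 × A), S (q.1.1 + 1)),
          (if treeTraj H x.1 x.2 π h.1 = s then
            (M.init x.1).toReal * ∏ q, (M.step q.1.1 q.2.1 q.2.2 (x.2 q)).toReal else 0))
              * ∫ y : ℝ, y ∂(M.reward h.1 s (π h.1 s)) := ?_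
    _ = ∑ s : S h.1, stateProbR M.init M.step π h.1 s
            * ∫ y : ℝ, y ∂(M.reward h.1 s (π h.1 s)) := by
        refine Finset.sum_congr rfl fun s _ => ?_
        rw [traj_prob M π h.1 h.2 s]
  · refine Finset.sum_congr rfl fun x _ => ?_
    have hsing : (ν {x}).toReal
        = (M.init x.1).toReal * ∏ q, (M.step q.1.1 q.2.1 q.2.2 (x.2 q)).toReal := by
      have h1 : ({x} : Set (S 0 × (∀ q : (h : Fin (H - 1)) × (S h.1 × A), S (q.1.1 + 1))))
          = {x.1} ×ˢ {x.2} := by rw [Set.singleton_prod_singleton]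
      rw [hν, h1, Measure.prod_prod,
        PMF.toMeasure_apply_singleton _ _ (measurableSet_singleton _)]
      have h2 : ({x.2} : Set (∀ q : (h : Fin (H - 1)) × (S h.1 × A), S (q.1.1 + 1)))
          = Set.pi Set.univ (fun q => {x.2 q}) := (Set.univ_pi_singleton _).symm
      rw [h2, Measure.pi_pi, ENNReal.toReal_mul, ENNReal.toReal_prod]
      refine congrArg _ (Finset.prod_congr rfl fun q _ => ?_)
      rw [PMF.toMeasure_apply_singleton _ _ (measurableSet_singleton _)]
    rw [hsing, smul_eq_mul, Finset.sum_ite_eq]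
    simp
  · rw [Finset.sum_comm]
    refine Finset.sum_congr rfl fun s _ => ?_
    rw [Finset.sum_mul]
    refine Finset.sum_congr rfl fun x _ => ?_
    by_cases hc : treeTraj H x.1 x.2 π h.1 = s
    · rw [if_pos hc, if_pos hc]
    · rw [if_neg hc, if_neg hc, zero_mul]
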